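/- Let n₀, ℓ ∈ ω and let s ∈ ω^{<ω} satisfy t_{n₀}⌢ℓ ⊆ s (i.e., s end-extends the sequence t_{n₀} followed by the single value ℓ). Then ν({ρ ∈ Ω : t_{n₀} ∉ W(ρ) and s ∈ W(ρ)}) ≤ 2^{-ℓ}. -/

import Mathlib

open MeasureTheory
open scoped ENNReal

/-- `sFn e n ρ` is the finite sequence `t_n ⌢ ⟨ρ(t_n,0), …, ρ(t_n,n+1)⟩`. -/
def sFn (e : ℕ → List ℕ) (n : ℕ) (ρ : List ℕ × ℕ → ℕ) : List ℕ :=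
  e n ++ List.ofFn fun i : Fin (n + 2) => ρ (e n, (i : ℕ))

/-- `Wset e ρ = {s : s_{t_n}(ρ) ⊆ s for some n}`. -/
def Wset (e : ℕ → List ℕ) (ρ : List ℕ × ℕ → ℕ) : Set (List ℕ) :=
  {s | ∃ n, sFn e n ρ <+: s}

/-- If the enumeration respects the prefix order, every list has length at most its index. -/
lemma len_le_idx (e : ℕ → List ℕ) (hbij : Function.Bijective e)
    (hord : ∀ n ℓ, e n <+: e ℓ → e n ≠ e ℓ → n < ℓ) :
    ∀ (t : List ℕ) (n : ℕ), e n = t → t.length ≤ n := by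
  intro t
  induction t using List.reverseRecOn with
  | nil => intro n _; exact Nat.zero_le n
  | append_singleton t' a ih =>
    intro n hn
    obtain ⟨m, hm⟩ := hbij.2 t'
    have h1 : t'.length ≤ m := ih m hm
    have h2 : m < n := by
      refine hord m n ?_ ?_
      · rw [hm, hn]; exact List.prefix_append _ _
      · rw [hm, hn]; intro h
        have := congrArg List.length h
        simp at this
    simp only [List.length_append, List.length_singleton]
    omega

theorem stmt0
    (e : ℕ → List ℕ) (hbij : Function.Bijective e)
    (hord : ∀ n ℓ, e n <+: e ℓ → e n ≠ e ℓ → n < ℓ)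
    (hsuc : ∀ n ℓ t k, e n = t ++ [k] → e ℓ = t ++ [k + 1] → n < ℓ)
    (ν : Measure (List ℕ × ℕ → ℕ)) [IsProbabilityMeasure ν]
    (hν : ∀ (F : Finset (List ℕ × ℕ)) (g : List ℕ × ℕ → ℕ),
      ν {ρ | ∀ c ∈ F, ρ c = g c} = ∏ c ∈ F, ((2 : ℝ≥0∞)⁻¹) ^ (g c + 1))
    (n₀ ℓ : ℕ) (s : List ℕ) (hs : e n₀ ++ [ℓ] <+: s) :
    ν {ρ | e n₀ ∉ Wset e ρ ∧ s ∈ Wset e ρ} ≤ (2 : ℝ≥0∞)⁻¹ ^ ℓ := by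
  classical
  set x : ℝ≥0∞ := (2 : ℝ≥0∞)⁻¹ with hxdef
  have hx1 : x ≤ 1 := ENNReal.inv_le_one.mpr one_le_two
  set T : List ℕ := e n₀ with hT
  set L : ℕ := T.length with hL
  set M : ℕ := n₀ + ℓ + 1 with hM
  set g : List ℕ × ℕ → ℕ := fun c => s.getD (c.1.length + c.2) 0 with hg
  -- the covering cylinders
  set A : ℕ → Set (List ℕ × ℕ → ℕ) := fun d =>
    {ρ | ∀ c ∈ (Finset.range (d+1)).image (fun j => (T.take (L-d), j)), ρ c = g c} with hA
  set C : ℕ → Set (List ℕ × ℕ → ℕ) := fun n =>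
    {ρ | ∀ c ∈ (Finset.range (n+2)).image (fun j => (e n, j)), ρ c = g c} with hC
  set B : ℕ → Set (List ℕ × ℕ → ℕ) := fun n => if M ≤ n then C n else ∅ with hB
  have hTs : T <+: s := (List.prefix_append T [ℓ]).trans hs
  have hLn₀ : L ≤ n₀ := len_le_idx e hbij hord T n₀ rfl
  -- s.getD L 0 = ℓ
  have hsL : s.getD L 0 = ℓ := by
    have hlen : L < (T ++ [ℓ]).length := by simp [hL]
    have h2 := hs.getElem hlen
    rw [List.getD_eq_getElem s 0 (lt_of_lt_of_le hlen hs.length_le), ← h2,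
      List.getElem_append_right (le_refl _)]
    simp
  -- key coordinate computation
  have key : ∀ (ρ : List ℕ × ℕ → ℕ) (n j : ℕ), j < n + 2 → sFn e n ρ <+: s →
      ρ (e n, j) = s.getD ((e n).length + j) 0 := by
    intro ρ n j hj hu
    have hlen : (e n).length + j < (sFn e n ρ).length := by
      simp [sFn]; omega
    have h1 : (sFn e n ρ)[(e n).length + j]'hlen = ρ (e n, j) := by
      simp only [sFn]
      rw [List.getElem_append_right (by omega)]
      simp only [Nat.add_sub_cancel_left]
      rw [List.getElem_ofFn]
    have h2 := hu.getElem hlen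
    rw [List.getD_eq_getElem s 0 (lt_of_lt_of_le hlen hu.length_le), ← h2, h1]
  -- indices of T ++ [k] are large
  have hidx : ∀ k m, e m = T ++ [k] → n₀ + k < m := by
    intro k
    induction k with
    | zero =>
      intro m hm
      have : n₀ < m := by
        refine hord n₀ m ?_ ?_
        · rw [hm]; exact List.prefix_append _ _
        · rw [hm]; intro h
          have := congrArg List.length h
          simp [← hT] at this
      omega
    | succ k ih =>
      intro m hm
      obtain ⟨m', hm'⟩ := hbij.2 (T ++ [k])
      have h1 := ih m' hm'
      have h2 := hsuc m' m T k hm' hm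
      omega
  -- the inclusion
  have hsub : {ρ | e n₀ ∉ Wset e ρ ∧ s ∈ Wset e ρ} ⊆
      (⋃ d ∈ Finset.range (L+1), A d) ∪ ⋃ n, B n := by
    rintro ρ ⟨hnW, n, hu⟩
    have hnuT : ¬ (sFn e n ρ <+: T) := fun h => hnW ⟨n, h⟩
    set u : List ℕ := sFn e n ρ with hudef
    have hulen : u.length = (e n).length + (n + 2) := by
      rw [hudef]; simp [sFn]
    have henu : e n <+: u := List.prefix_append _ _
    have hens : e n <+: s := henu.trans hu
    -- T ++ [ℓ] <+: u
    have hTlu : T ++ [ℓ] <+: u := by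
      rcases List.prefix_or_prefix_of_prefix hu hs with h | h
      · by_cases hle : u.length ≤ L
        · exact absurd (List.prefix_of_prefix_length_le hu hTs hle) hnuT
        · have : u = T ++ [ℓ] := h.eq_of_length_le (by simp; omega)
          rw [this]
      · exact h
    have hLu : L + 1 ≤ u.length := by
      have := hTlu.length_le; simpa using this
    by_cases hc : (e n).length ≤ L
    · -- case: e n is a prefix of T
      left
      have henT : e n <+: T := List.prefix_of_prefix_length_le hens hTs hc
      set d : ℕ := L - (e n).length with hd
      have hdL : d ≤ L := Nat.sub_le _ _
      have hdn : d ≤ n + 1 := by omega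
      have htake : T.take (L - d) = e n := by
        have h1 : L - d = (e n).length := by omega
        rw [h1]
        exact (List.prefix_iff_eq_take.mp henT).symm
      have hmem : ρ ∈ A d := by
        intro c hc'
        simp only [Finset.mem_image, Finset.mem_range] at hc'
        obtain ⟨j, hj, rfl⟩ := hc'
        rw [htake]
        exact key ρ n j (by omega) hu
      exact Set.mem_iUnion₂.mpr ⟨d, Finset.mem_range.mpr (by omega), hmem⟩
    · -- case: T ++ [ℓ] is a prefix of e n
      right
      push_neg at hc
      have hTen : T ++ [ℓ] <+: e n := by
        refine List.prefix_of_prefix_length_le hTlu henu ?_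
        simp; omega
      have hMn : M ≤ n := by
        obtain ⟨m, hm⟩ := hbij.2 (T ++ [ℓ])
        have h1 : n₀ + ℓ < m := hidx ℓ m hm
        have h2 : m ≤ n := by
          by_cases heq : e m = e n
          · exact le_of_eq (hbij.1 heq)
          · exact le_of_lt (hord m n (hm ▸ hTen) heq)
        omega
      have hBn : B n = C n := by rw [hB]; simp [hMn]
      refine Set.mem_iUnion.mpr ⟨n, ?_⟩
      rw [hBn]
      intro c hc'
      simp only [Finset.mem_image, Finset.mem_range] at hc'
      obtain ⟨j, hj, rfl⟩ := hc'
      exact key ρ n j hj hu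
  -- measure of the A cylinders
  have hApow : ∀ d, d ≤ L → ν (A d) ≤ x ^ (ℓ + 1) * x ^ d := by
    intro d hdL
    have hinj : ∀ a ∈ Finset.range (d+1), ∀ b ∈ Finset.range (d+1),
        (fun j => (T.take (L-d), j)) a = (fun j => (T.take (L-d), j)) b → a = b := by
      intro a _ b _ h; simpa using h
    have h1 : ν (A d) = ∏ j ∈ Finset.range (d+1), x ^ (g (T.take (L-d), j) + 1) := by
      rw [hA]
      rw [hν ((Finset.range (d+1)).image (fun j => (T.take (L-d), j))) g]
      exact Finset.prod_image hinj
    rw [h1, Finset.prod_range_succ]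
    have hlen : (T.take (L-d)).length = L - d := by
      rw [List.length_take]; omega
    have hgd : g (T.take (L-d), d) = ℓ := by
      simp only [hg]
      rw [hlen, show L - d + d = L by omega, hsL]
    rw [hgd, mul_comm]
    refine mul_le_mul' le_rfl ?_
    calc ∏ j ∈ Finset.range d, x ^ (g (T.take (L-d), j) + 1)
        ≤ ∏ _j ∈ Finset.range d, x := by
          refine Finset.prod_le_prod' ?_
          intro i _
          calc x ^ (g (T.take (L-d), i) + 1) = x ^ (g (T.take (L-d), i)) * x := by
                rw [pow_succ]
            _ ≤ 1 * x := mul_le_mul' (pow_le_one' hx1 _) le_rfl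
            _ = x := one_mul x
      _ = x ^ d := by rw [Finset.prod_const, Finset.card_range]
  -- measure of the B cylinders
  have hBpow : ∀ n, ν (B n) ≤ if M ≤ n then x ^ (n + 2) else 0 := by
    intro n
    rw [hB]
    by_cases hMn : M ≤ n
    · simp only [if_pos hMn]
      have hinj : ∀ a ∈ Finset.range (n+2), ∀ b ∈ Finset.range (n+2),
          (fun j => (e n, j)) a = (fun j => (e n, j)) b → a = b := by
        intro a _ b _ h; simpa using h
      have h1 : ν (C n) = ∏ j ∈ Finset.range (n+2), x ^ (g (e n, j) + 1) := by
        rw [hC]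
        rw [hν ((Finset.range (n+2)).image (fun j => (e n, j))) g]
        exact Finset.prod_image hinj
      rw [h1]
      calc ∏ j ∈ Finset.range (n+2), x ^ (g (e n, j) + 1)
          ≤ ∏ _j ∈ Finset.range (n+2), x := by
            refine Finset.prod_le_prod' ?_
            intro i _
            calc x ^ (g (e n, i) + 1) = x ^ (g (e n, i)) * x := by rw [pow_succ]
              _ ≤ 1 * x := mul_le_mul' (pow_le_one' hx1 _) le_rfl
              _ = x := one_mul x
        _ = x ^ (n + 2) := by rw [Finset.prod_const, Finset.card_range]
    · simp [if_neg hMn]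
  -- sum of B measures
  have hBsum : ∑' n, ν (B n) ≤ x ^ (M + 1) := by
    have h1 : ∑' n, ν (B n) ≤ ∑' n, (if M ≤ n then x ^ (n + 2) else 0) :=
      ENNReal.tsum_le_tsum hBpow
    have h2 : ∑' (k : ℕ), (if M ≤ M + k then x ^ (M + k + 2) else 0)
        = ∑' n, (if M ≤ n then x ^ (n + 2) else 0) := by
      refine Function.Injective.tsum_eq (f := fun n => if M ≤ n then x ^ (n + 2) else 0)
        (fun a b h => by omega) ?_
      intro n hn
      simp only [Function.mem_support] at hn
      by_cases hMn : M ≤ n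
      · exact ⟨n - M, by omega⟩
      · simp [if_neg hMn] at hn
    have hx2 : (2 : ℝ≥0∞)⁻¹ ^ (M + 2) * 2 = (2 : ℝ≥0∞)⁻¹ ^ (M + 1) := by
      have h : (2 : ℝ≥0∞)⁻¹ * 2 = 1 :=
        ENNReal.inv_mul_cancel two_ne_zero ENNReal.ofNat_ne_top
      calc (2 : ℝ≥0∞)⁻¹ ^ (M + 2) * 2
          = (2 : ℝ≥0∞)⁻¹ ^ (M + 1) * ((2 : ℝ≥0∞)⁻¹ * 2) := by ring
        _ = (2 : ℝ≥0∞)⁻¹ ^ (M + 1) := by rw [h, mul_one]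
    have h3 : ∑' (k : ℕ), (if M ≤ M + k then x ^ (M + k + 2) else 0) = x ^ (M + 1) := by
      have heq : ∀ k : ℕ, (if M ≤ M + k then x ^ (M + k + 2) else 0) = x ^ (M + 2) * x ^ k := by
        intro k
        rw [if_pos (Nat.le_add_right _ _)]
        rw [show M + k + 2 = (M + 2) + k by omega, pow_add]
      rw [tsum_congr heq, ENNReal.tsum_mul_left, ENNReal.tsum_geometric, hxdef,
        ENNReal.one_sub_inv_two, inv_inv]
      exact hx2
    rw [← h2, h3] at h1
    exact h1
  -- geometric identities
  have hhalf : ∀ k : ℕ, x ^ (k+1) + x ^ (k+1) = x ^ k := by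
    intro k
    rw [pow_succ, ← mul_add, hxdef, ENNReal.inv_two_add_inv_two, mul_one]
  have hgeo : ∀ N : ℕ, x * (∑ d ∈ Finset.range N, x ^ d) + x ^ N = 1 := by
    intro N
    induction N with
    | zero => simp
    | succ N ih =>
      rw [Finset.sum_range_succ, mul_add, add_assoc]
      rw [show x * x ^ N = x ^ (N+1) by rw [pow_succ, mul_comm]]
      rw [hhalf N, ih]
  -- pow antitone
  have hpow_le : ∀ {a b : ℕ}, a ≤ b → x ^ b ≤ x ^ a := by
    intro a b hab
    calc x ^ b = x ^ a * x ^ (b - a) := by rw [← pow_add]; congr 1; omega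
      _ ≤ x ^ a * 1 := mul_le_mul' le_rfl (pow_le_one' hx1 _)
      _ = x ^ a := mul_one _
  -- put everything together
  calc ν {ρ | e n₀ ∉ Wset e ρ ∧ s ∈ Wset e ρ}
      ≤ ν ((⋃ d ∈ Finset.range (L+1), A d) ∪ ⋃ n, B n) := measure_mono hsub
    _ ≤ ν (⋃ d ∈ Finset.range (L+1), A d) + ν (⋃ n, B n) := measure_union_le _ _
    _ ≤ (∑ d ∈ Finset.range (L+1), ν (A d)) + ∑' n, ν (B n) :=
        add_le_add (measure_biUnion_finset_le _ _) (measure_iUnion_le _)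
    _ ≤ (∑ d ∈ Finset.range (L+1), x ^ (ℓ + 1) * x ^ d) + x ^ (M + 1) := by
        refine add_le_add (Finset.sum_le_sum ?_) hBsum
        intro d hd
        exact hApow d (Nat.lt_succ_iff.mp (Finset.mem_range.mp hd))
    _ = x ^ ℓ * (x * ∑ d ∈ Finset.range (L+1), x ^ d) + x ^ ℓ * x ^ (n₀ + 2) := by
        rw [← Finset.mul_sum]
        congr 1
        · rw [← mul_assoc, ← pow_succ]
        · rw [← pow_add]; congr 1; omega
    _ ≤ x ^ ℓ * (x * ∑ d ∈ Finset.range (L+1), x ^ d) + x ^ ℓ * x ^ (L + 1) :=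
        add_le_add le_rfl (mul_le_mul' le_rfl (hpow_le (by omega)))
    _ = x ^ ℓ * (x * (∑ d ∈ Finset.range (L+1), x ^ d) + x ^ (L + 1)) := by
        rw [mul_add]
    _ = x ^ ℓ * 1 := by rw [hgeo (L+1)]
    _ = x ^ ℓ := mul_one _
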